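/- For every (v,q) ∈ V × Q there exists a pair (w,r) ∈ V × Q such that (‖w‖_V² + ‖r‖_Q²)^{1/2} ≤ √2/γ and ‖v‖_V + ‖q‖_Q ≤ Re A((v,q);(w,r)), where γ := (1/2) · (α⁻²(1 + 2C_b²M²)² + 2C_b²)^{-1/2}. -/

import Mathlib

set_option maxHeartbeats 1000000 in
/-- Stability of the Oseen-type saddle-point form `A` (acting through its second
argument): for every `(v,q)` there is a test pair `(w,r)` of norm at most `√2/γ`
with `‖v‖ + ‖q‖ ≤ Re A((v,q);(w,r))`. -/
theorem oseen_saddle_stability_primal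
    {V Q : Type*} [NormedAddCommGroup V] [InnerProductSpace ℂ V] [CompleteSpace V]
    [NormedAddCommGroup Q] [InnerProductSpace ℂ Q] [CompleteSpace Q]
    (a : V →ₗ[ℂ] V →ₛₗ[starRingEnd ℂ] ℂ)
    (d : Q →ₗ[ℂ] V →ₛₗ[starRingEnd ℂ] ℂ)
    (α M M_d C_b : ℝ) (hα : 0 < α) (hM : 0 < M) (hMd : 0 < M_d) (hCb : 0 < C_b)
    (hcoer : ∀ v : V, α * ‖v‖ ^ 2 ≤ (a v v).re)
    (hcont : ∀ u v : V, ‖a u v‖ ≤ M * ‖u‖ * ‖v‖)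
    (hdbdd : ∀ (q : Q) (v : V), ‖d q v‖ ≤ M_d * ‖q‖ * ‖v‖)
    (hinv : ∀ q : Q, ∃ vt : V, d q vt = (‖q‖ : ℂ) ^ 2 ∧ ‖vt‖ ≤ C_b * ‖q‖)
    (A : V × Q → V × Q → ℂ)
    (hA : ∀ (u : V) (p : Q) (v : V) (q : Q),
      A (u, p) (v, q) = a u v + d p v - starRingEnd ℂ (d q u))
    (γ : ℝ)
    (hγ : γ = (1 / 2) / Real.sqrt (α⁻¹ ^ 2 * (1 + 2 * C_b ^ 2 * M ^ 2) ^ 2 + 2 * C_b ^ 2))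
    (v : V) (q : Q) :
    ∃ (w : V) (r : Q),
      Real.sqrt (‖w‖ ^ 2 + ‖r‖ ^ 2) ≤ Real.sqrt 2 / γ ∧
      ‖v‖ + ‖q‖ ≤ (A (v, q) (w, r)).re := by
  have hD : (0:ℝ) < α⁻¹ ^ 2 * (1 + 2 * C_b ^ 2 * M ^ 2) ^ 2 + 2 * C_b ^ 2 := by positivity
  have hγpos : 0 < γ := by
    rw [hγ]; exact div_pos one_half_pos (Real.sqrt_pos.mpr hD)
  have hγsq : γ ^ 2 * (α⁻¹ ^ 2 * (1 + 2 * C_b ^ 2 * M ^ 2) ^ 2 + 2 * C_b ^ 2) = 1 / 4 := by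
    rw [hγ, div_pow, Real.sq_sqrt hD.le, div_mul_cancel₀ _ hD.ne']
    norm_num
  -- abbreviations
  obtain ⟨t, ht_def⟩ : ∃ t : ℝ, t = γ * (1 + 2 * C_b ^ 2 * M ^ 2) / α := ⟨_, rfl⟩
  obtain ⟨s, hs_def⟩ : ∃ s : ℝ, s = 2 * γ := ⟨_, rfl⟩
  have ht : 0 < t := by rw [ht_def]; positivity
  have hs : 0 < s := by rw [hs_def]; positivity
  have htα : t * α = γ * (1 + 2 * C_b ^ 2 * M ^ 2) := by
    rw [ht_def]; field_simp
  have hts : t ^ 2 = γ ^ 2 * (α⁻¹ ^ 2 * (1 + 2 * C_b ^ 2 * M ^ 2) ^ 2) := by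
    rw [ht_def]; field_simp
  have hA1 : t ^ 2 ≤ 1 / 4 := by
    have h := sq_nonneg (γ * C_b)
    nlinarith [hts, hγsq]
  have hA2 : 2 * s ^ 2 * C_b ^ 2 + t ^ 2 ≤ 1 := by
    rw [hs_def]
    nlinarith [hts, hγsq, sq_nonneg t]
  obtain ⟨vt, hdvt, hvtn⟩ := hinv q
  -- the basic test pair
  obtain ⟨w₀, hw₀_def⟩ : ∃ w₀ : V, w₀ = (t:ℂ) • v + (s:ℂ) • vt := ⟨_, rfl⟩
  obtain ⟨r₀, hr₀_def⟩ : ∃ r₀ : Q, r₀ = (t:ℂ) • q := ⟨_, rfl⟩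
  have e1 : a v w₀ = (t:ℂ) * a v v + (s:ℂ) * a v vt := by
    rw [hw₀_def, map_add, map_smulₛₗ, map_smulₛₗ, Complex.conj_ofReal, Complex.conj_ofReal,
      smul_eq_mul, smul_eq_mul]
  have e2 : d q w₀ = (t:ℂ) * d q v + (s:ℂ) * (‖q‖:ℂ) ^ 2 := by
    rw [hw₀_def, map_add, map_smulₛₗ, map_smulₛₗ, Complex.conj_ofReal, Complex.conj_ofReal,
      smul_eq_mul, smul_eq_mul, hdvt]
  have e3 : d r₀ v = (t:ℂ) * d q v := by
    rw [hr₀_def, map_smul, LinearMap.smul_apply, smul_eq_mul]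
  have hre : (A (v, q) (w₀, r₀)).re = t * (a v v).re + s * (a v vt).re + s * ‖q‖ ^ 2 := by
    rw [hA, e1, e2, e3, map_mul, Complex.conj_ofReal]
    simp [Complex.add_re, Complex.sub_re, Complex.re_ofReal_mul, ← Complex.ofReal_pow,
      Complex.conj_re]
    ring
  have hAvt : -(M * C_b * (‖v‖ * ‖q‖)) ≤ (a v vt).re := by
    have h1 : |(a v vt).re| ≤ ‖a v vt‖ := Complex.abs_re_le_norm _
    have h2 : ‖a v vt‖ ≤ M * ‖v‖ * ‖vt‖ := hcont v vt
    have h3 : M * ‖v‖ * ‖vt‖ ≤ M * ‖v‖ * (C_b * ‖q‖) := by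
      apply mul_le_mul_of_nonneg_left hvtn (by positivity)
    linarith [neg_abs_le ((a v vt).re), h1, h2, h3]
  have hkey : γ * (‖v‖ ^ 2 + ‖q‖ ^ 2) ≤ (A (v, q) (w₀, r₀)).re := by
    rw [hre]
    have h1 := hcoer v
    have h2 : t * (α * ‖v‖ ^ 2) ≤ t * (a v v).re := by
      exact mul_le_mul_of_nonneg_left h1 ht.le
    have h3 : s * (-(M * C_b * (‖v‖ * ‖q‖))) ≤ s * (a v vt).re :=
      mul_le_mul_of_nonneg_left hAvt hs.le
    have h2' : t * (α * ‖v‖ ^ 2) = γ * (1 + 2 * C_b ^ 2 * M ^ 2) * ‖v‖ ^ 2 := by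
      rw [← htα]; ring
    rw [h2'] at h2
    rw [hs_def] at h3 ⊢
    linarith [mul_nonneg hγpos.le (sq_nonneg (M * C_b * ‖v‖ - ‖q‖)),
      mul_nonneg hγpos.le (sq_nonneg (M * C_b * ‖v‖)), h2, h3]
  -- norm bound on the basic pair
  have hw₀n : ‖w₀‖ ≤ t * ‖v‖ + s * (C_b * ‖q‖) := by
    rw [hw₀_def]
    refine (norm_add_le _ _).trans ?_
    rw [norm_smul, norm_smul, Complex.norm_real, Real.norm_eq_abs, Complex.norm_real, Real.norm_eq_abs,
      abs_of_pos ht, abs_of_pos hs]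
    gcongr
  have hr₀n : ‖r₀‖ = t * ‖q‖ := by
    rw [hr₀_def, norm_smul, Complex.norm_real, Real.norm_eq_abs, abs_of_pos ht]
  have hn0 : ‖w₀‖ ^ 2 + ‖r₀‖ ^ 2 ≤ ‖v‖ ^ 2 + ‖q‖ ^ 2 := by
    have h1 : ‖w₀‖ ^ 2 ≤ (t * ‖v‖ + s * (C_b * ‖q‖)) ^ 2 := by
      apply pow_le_pow_left₀ (norm_nonneg _) hw₀n
    have hr₀sq : ‖r₀‖ ^ 2 = t ^ 2 * ‖q‖ ^ 2 := by rw [hr₀n]; ring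
    have b1 : t ^ 2 * ‖v‖ ^ 2 ≤ 1 / 4 * ‖v‖ ^ 2 :=
      mul_le_mul_of_nonneg_right hA1 (sq_nonneg _)
    have b2 : (2 * s ^ 2 * C_b ^ 2 + t ^ 2) * ‖q‖ ^ 2 ≤ 1 * ‖q‖ ^ 2 :=
      mul_le_mul_of_nonneg_right hA2 (sq_nonneg _)
    linarith [h1, sq_nonneg (t * ‖v‖ - s * (C_b * ‖q‖)), b1, b2, hr₀sq, sq_nonneg ‖v‖]
  -- split on whether (v,q) = 0
  by_cases h0 : ‖v‖ ^ 2 + ‖q‖ ^ 2 = 0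
  · have hv0 : ‖v‖ = 0 := by
      have h1 := sq_nonneg ‖v‖
      have h2 := sq_nonneg ‖q‖
      have h3 : ‖v‖ ^ 2 = 0 := by linarith
      exact pow_eq_zero_iff (by norm_num) |>.mp h3
    have hq0 : ‖q‖ = 0 := by
      have h1 := sq_nonneg ‖v‖
      have h2 := sq_nonneg ‖q‖
      have h3 : ‖q‖ ^ 2 = 0 := by linarith
      exact pow_eq_zero_iff (by norm_num) |>.mp h3
    refine ⟨0, 0, ?_, ?_⟩
    · have hz : Real.sqrt (‖(0:V)‖ ^ 2 + ‖(0:Q)‖ ^ 2) = 0 := by simp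
      rw [hz]
      positivity
    · rw [hv0, hq0, hA]
      simp
  · have hN : 0 < ‖v‖ ^ 2 + ‖q‖ ^ 2 := lt_of_le_of_ne (by positivity) (Ne.symm h0)
    obtain ⟨N, hN_def⟩ : ∃ N : ℝ, N = Real.sqrt (‖v‖ ^ 2 + ‖q‖ ^ 2) := ⟨_, rfl⟩
    have hNpos : 0 < N := by rw [hN_def]; exact Real.sqrt_pos.mpr hN
    have hNsq : N ^ 2 = ‖v‖ ^ 2 + ‖q‖ ^ 2 := by rw [hN_def]; exact Real.sq_sqrt hN.le
    obtain ⟨c, hc_def⟩ : ∃ c : ℝ, c = Real.sqrt 2 / (γ * N) := ⟨_, rfl⟩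
    have hcpos : 0 < c := by rw [hc_def]; positivity
    refine ⟨(c:ℂ) • w₀, (c:ℂ) • r₀, ?_, ?_⟩
    · rw [norm_smul, norm_smul, Complex.norm_real, Real.norm_eq_abs, abs_of_pos hcpos]
      have : (c * ‖w₀‖) ^ 2 + (c * ‖r₀‖) ^ 2 = c ^ 2 * (‖w₀‖ ^ 2 + ‖r₀‖ ^ 2) := by ring
      rw [this, Real.sqrt_mul (by positivity), Real.sqrt_sq hcpos.le]
      have h1 : Real.sqrt (‖w₀‖ ^ 2 + ‖r₀‖ ^ 2) ≤ N := by
        rw [hN_def]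
        exact Real.sqrt_le_sqrt hn0
      calc c * Real.sqrt (‖w₀‖ ^ 2 + ‖r₀‖ ^ 2) ≤ c * N := by gcongr
        _ = Real.sqrt 2 / γ := by
            rw [hc_def]; field_simp
    · have escale : A (v, q) ((c:ℂ) • w₀, (c:ℂ) • r₀) = (c:ℂ) * A (v, q) (w₀, r₀) := by
        simp only [hA, map_smulₛₗ, map_smul, LinearMap.smul_apply, smul_eq_mul,
          Complex.conj_ofReal, map_mul, RingHom.id_apply]
        ring
      rw [escale, Complex.re_ofReal_mul]
      have h1 : ‖v‖ + ‖q‖ ≤ Real.sqrt 2 * N := by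
        have h2 : ((‖v‖ + ‖q‖) : ℝ) = Real.sqrt ((‖v‖ + ‖q‖) ^ 2) := by
          rw [Real.sqrt_sq (by positivity)]
        rw [h2]
        have h3 : (‖v‖ + ‖q‖) ^ 2 ≤ 2 * N ^ 2 := by
          rw [hNsq]; nlinarith [sq_nonneg (‖v‖ - ‖q‖)]
        calc Real.sqrt ((‖v‖ + ‖q‖) ^ 2) ≤ Real.sqrt (2 * N ^ 2) := Real.sqrt_le_sqrt h3
          _ = Real.sqrt 2 * N := by
              rw [Real.sqrt_mul (by norm_num), Real.sqrt_sq hNpos.le]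
      have h4 : Real.sqrt 2 * N ≤ c * (A (v, q) (w₀, r₀)).re := by
        have h5 : c * (γ * (‖v‖ ^ 2 + ‖q‖ ^ 2)) ≤ c * (A (v, q) (w₀, r₀)).re :=
          mul_le_mul_of_nonneg_left hkey hcpos.le
        have h6 : c * (γ * (‖v‖ ^ 2 + ‖q‖ ^ 2)) = Real.sqrt 2 * N := by
          rw [hc_def, ← hNsq]; field_simp
        linarith
      linarith
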